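/- Let T > 0, let V₁,…,V_p : ℝⁿ × ℝ → ℝ be continuously differentiable, fix r ∈ {1,…,p}, and define the pivot h̃(y, τ) := max^{(r)}(V₁(y,τ),…,V_p(y,τ)) (the r-th largest value). Let α : ℝ → ℝ be extended class-K and locally Lipschitz, let θ : [0,T] → [0,∞) be continuous, let ρ : ℝ → ℝ be continuous and positive definite, and let τ₂ : [0,T] → ℝ be differentiable. Let x : [0,T] → ℝⁿ be a differentiable curve such that for every j ∈ {1,…,p} and every t ∈ [0,T]: (d/dt)[V_j(x(t), τ₂(t))] ≥ −α(V_j(x(t), τ₂(t))) − θ(t)·ρ(V_j(x(t), τ₂(t)) − h̃(x(t), τ₂(t))). If at least r of the values V₁(x(0), τ₂(0)),…,V_p(x(0), τ₂(0)) are nonnegative, then for every t ∈ [0,T] at least r of the values V₁(x(t), τ₂(t)),…,V_p(x(t), τ₂(t)) are nonnegative. -/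

import Mathlib

/-- The `r`-th largest value among `w 0, …, w (p-1)`: the maximum over all subsets
`S ⊆ Fin p` with `|S| = r` of `min_{j ∈ S} w j`. -/
noncomputable def rthMax {p : ℕ} (r : ℕ) (w : Fin p → ℝ) : ℝ :=
  sSup {m : ℝ | ∃ S : Finset (Fin p), S.card = r ∧ m = sInf (w '' ↑S)}

/-- An extended class-K function: continuous, strictly increasing, vanishing at `0`. -/
def IsClassKe (α : ℝ → ℝ) : Prop :=
  Continuous α ∧ StrictMono α ∧ α 0 = 0

/-- A positive definite function: nonnegative, vanishing exactly at `0`. -/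
def IsPosDef (ρ : ℝ → ℝ) : Prop :=
  (∀ s : ℝ, 0 ≤ ρ s) ∧ ρ 0 = 0 ∧ ∀ s : ℝ, s ≠ 0 → 0 < ρ s

section RthMaxLemmas
variable {p r : ℕ} {w : Fin p → ℝ}

lemma rth_set_finite (w : Fin p → ℝ) (r : ℕ) :
    {m : ℝ | ∃ S : Finset (Fin p), S.card = r ∧ m = sInf (w '' ↑S)}.Finite := by
  apply Set.Finite.subset (Set.finite_range (fun S : Finset (Fin p) => sInf (w '' ↑S)))
  rintro m ⟨S, -, rfl⟩
  exact ⟨S, rfl⟩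

lemma sInf_image_finset_le {S : Finset (Fin p)} {j : Fin p} (hj : j ∈ S) :
    sInf (w '' ↑S) ≤ w j := by
  have hne : (S.image w).Nonempty := ⟨w j, Finset.mem_image_of_mem w hj⟩
  rw [← Finset.coe_image, hne.csInf_eq_min']
  exact Finset.min'_le _ _ (Finset.mem_image_of_mem w hj)

lemma exists_sInf_image_finset_eq {S : Finset (Fin p)} (hS : S.Nonempty) :
    ∃ j ∈ S, sInf (w '' ↑S) = w j := by
  have hne : (S.image w).Nonempty := hS.image w
  rw [← Finset.coe_image, hne.csInf_eq_min']
  obtain ⟨j, hj, hjw⟩ := Finset.mem_image.mp (Finset.min'_mem (S.image w) hne)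
  exact ⟨j, hj, hjw.symm⟩

lemma le_rthMax_of_card {S : Finset (Fin p)} (hS : S.card = r) :
    sInf (w '' ↑S) ≤ rthMax r w :=
  le_csSup (rth_set_finite w r).bddAbove ⟨S, hS, rfl⟩

lemma exists_rthMax_eq (hr1 : 1 ≤ r) (hrp : r ≤ p) :
    ∃ S : Finset (Fin p), S.card = r ∧ S.Nonempty ∧ rthMax r w = sInf (w '' ↑S) := by
  obtain ⟨S, -, hS⟩ := Finset.exists_subset_card_eq (s := (Finset.univ : Finset (Fin p))) (n := r)
    (by simpa using hrp)
  have hne : {m : ℝ | ∃ S : Finset (Fin p), S.card = r ∧ m = sInf (w '' ↑S)}.Nonempty :=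
    ⟨_, S, hS, rfl⟩
  obtain ⟨S', hS', hm⟩ := hne.csSup_mem (rth_set_finite w r)
  exact ⟨S', hS', Finset.card_pos.mp (by omega), hm⟩

lemma rthMax_le_card_filter (hr1 : 1 ≤ r) (hrp : r ≤ p) :
    r ≤ (Finset.univ.filter (fun j => rthMax r w ≤ w j)).card := by
  obtain ⟨S, hcard, hne, heq⟩ := exists_rthMax_eq (w := w) hr1 hrp
  have hsub : S ⊆ Finset.univ.filter (fun j => rthMax r w ≤ w j) := by
    intro j hj
    simp only [Finset.mem_filter, Finset.mem_univ, true_and]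
    rw [heq]; exact sInf_image_finset_le hj
  calc r = S.card := hcard.symm
    _ ≤ _ := Finset.card_le_card hsub

lemma card_filter_lt_rthMax (hr1 : 1 ≤ r) (hrp : r ≤ p) :
    (Finset.univ.filter (fun j => rthMax r w < w j)).card < r := by
  by_contra hcon
  push_neg at hcon
  obtain ⟨S, hSsub, hScard⟩ := Finset.exists_subset_card_eq hcon
  have h1 : sInf (w '' ↑S) ≤ rthMax r w := le_rthMax_of_card hScard
  have hSne : S.Nonempty := Finset.card_pos.mp (by omega)
  obtain ⟨j, hj, hjeq⟩ := exists_sInf_image_finset_eq hSne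
  rw [hjeq] at h1
  have h2 := hSsub hj
  simp only [Finset.mem_filter, Finset.mem_univ, true_and] at h2
  linarith

lemma lt_rthMax_of_finset (hr1 : 1 ≤ r) {v : ℝ} {S : Finset (Fin p)} (hcard : S.card = r)
    (hall : ∀ j ∈ S, v < w j) : v < rthMax r w := by
  have hSne : S.Nonempty := Finset.card_pos.mp (by omega)
  obtain ⟨j, hj, hjeq⟩ := exists_sInf_image_finset_eq hSne
  have h1 := le_rthMax_of_card (w := w) hcard
  rw [hjeq] at h1
  exact lt_of_lt_of_le (hall j hj) h1

lemma le_rthMax_of_finset (hr1 : 1 ≤ r) {v : ℝ} {S : Finset (Fin p)} (hcard : S.card = r)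
    (hall : ∀ j ∈ S, v ≤ w j) : v ≤ rthMax r w := by
  have hSne : S.Nonempty := Finset.card_pos.mp (by omega)
  obtain ⟨j, hj, hjeq⟩ := exists_sInf_image_finset_eq hSne
  have h1 := le_rthMax_of_card (w := w) hcard
  rw [hjeq] at h1
  exact le_trans (hall j hj) h1

lemma rthMax_le_of_card (hr1 : 1 ≤ r) (hrp : r ≤ p) {v : ℝ}
    (hc : (Finset.univ.filter (fun j => v < w j)).card < r) : rthMax r w ≤ v := by
  by_contra hcon
  push_neg at hcon
  obtain ⟨S, hcard, hne, heq⟩ := exists_rthMax_eq (w := w) hr1 hrp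
  have hsub : S ⊆ Finset.univ.filter (fun j => v < w j) := by
    intro j hj
    simp only [Finset.mem_filter, Finset.mem_univ, true_and]
    have h1 : sInf (w '' ↑S) ≤ w j := sInf_image_finset_le hj
    rw [← heq] at h1
    linarith
  have := Finset.card_le_card hsub
  omega

lemma rthMax_sandwich (hr1 : 1 ≤ r) (hrp : r ≤ p) {w w' : Fin p → ℝ} {η : ℝ} (hη : 0 < η)
    (hgap : ∀ j, w j ≠ rthMax r w → η ≤ |w j - rthMax r w|)
    (hclose : ∀ j, |w' j - w j| < η / 2) :
    |rthMax r w' - rthMax r w| ≤ η / 2 ∧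
      ∃ j, w j = rthMax r w ∧ rthMax r w' = w' j := by
  have habs : ∀ j, w j - η/2 < w' j ∧ w' j < w j + η/2 := by
    intro j
    have := abs_lt.mp (hclose j)
    constructor <;> linarith [this.1, this.2]
  have hup : rthMax r w' ≤ rthMax r w + η / 2 := by
    apply rthMax_le_of_card hr1 hrp
    have hsub : (Finset.univ.filter (fun j => rthMax r w + η/2 < w' j)) ⊆
        (Finset.univ.filter (fun j => rthMax r w < w j)) := by
      intro j hj
      simp only [Finset.mem_filter, Finset.mem_univ, true_and] at hj ⊢
      linarith [(habs j).2]
    exact lt_of_le_of_lt (Finset.card_le_card hsub) (card_filter_lt_rthMax hr1 hrp)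
  have hlow : rthMax r w - η / 2 < rthMax r w' := by
    obtain ⟨S, hSsub, hScard⟩ := Finset.exists_subset_card_eq
      (s := Finset.univ.filter (fun j => rthMax r w ≤ w j)) (rthMax_le_card_filter hr1 hrp)
    apply lt_rthMax_of_finset hr1 hScard
    intro j hj
    have h2 := hSsub hj
    simp only [Finset.mem_filter, Finset.mem_univ, true_and] at h2
    linarith [(habs j).1]
  refine ⟨abs_le.mpr ⟨by linarith, by linarith⟩, ?_⟩
  obtain ⟨S, hcard, hne, heq⟩ := exists_rthMax_eq (w := w') hr1 hrp
  obtain ⟨j, hj, hjeq⟩ := exists_sInf_image_finset_eq hne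
  refine ⟨j, ?_, heq.trans hjeq⟩
  by_contra hjc
  have hg := hgap j hjc
  have hw'j : rthMax r w' = w' j := heq.trans hjeq
  rcases lt_or_gt_of_ne hjc with hlt | hgt
  · rw [abs_of_neg (sub_neg.mpr hlt)] at hg
    linarith [(habs j).2, hw'j ▸ hlow]
  · rw [abs_of_pos (sub_pos.mpr hgt)] at hg
    linarith [(habs j).1, hw'j ▸ hup]

end RthMaxLemmas

open Filter Topology Set

theorem core_invariance {p r : ℕ} (hr1 : 1 ≤ r) (hrp : r ≤ p) {T : ℝ} (hT : 0 < T)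
    (g : Fin p → ℝ → ℝ)
    (hgd : ∀ j, ∀ t ∈ Set.Icc (0:ℝ) T, DifferentiableAt ℝ (g j) t)
    (α : ℝ → ℝ) (hα : IsClassKe α)
    (hineq : ∀ j, ∀ t ∈ Set.Icc (0:ℝ) T, g j t = rthMax r (fun i => g i t) →
      -α (g j t) ≤ deriv (g j) t)
    (h0 : 0 ≤ rthMax r (fun i => g i 0)) :
    ∀ t ∈ Set.Icc (0:ℝ) T, 0 ≤ rthMax r (fun i => g i t) := by
  set h : ℝ → ℝ := fun u => rthMax r (fun i => g i u) with hh
  -- key eventual lemma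
  have key : ∀ u ∈ Set.Icc (0:ℝ) T, ∀ ε' > (0:ℝ), ∀ᶠ z in 𝓝 u,
      |h z - h u| ≤ ε' / 2 ∧ ∃ j, g j u = h u ∧ h z = g j z := by
    intro u hu ε' hε'
    set G : Finset ℝ := insert ε' ((Finset.univ.filter (fun j => g j u ≠ h u)).image
      (fun j => |g j u - h u|)) with hG
    have hGne : G.Nonempty := ⟨ε', Finset.mem_insert_self _ _⟩
    set η := G.min' hGne with hηdef
    have hηpos : 0 < η := by
      rw [hηdef]
      rw [Finset.lt_min'_iff]
      intro b hb
      rw [hG, Finset.mem_insert] at hb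
      rcases hb with rfl | hb
      · exact hε'
      · obtain ⟨j, hj, rfl⟩ := Finset.mem_image.mp hb
        simp only [Finset.mem_filter, Finset.mem_univ, true_and] at hj
        exact abs_pos.mpr (sub_ne_zero.mpr hj)
    have hηε' : η ≤ ε' := Finset.min'_le _ _ (Finset.mem_insert_self _ _)
    have hgap : ∀ j, g j u ≠ h u → η ≤ |g j u - h u| := by
      intro j hj
      apply Finset.min'_le
      rw [hG]
      exact Finset.mem_insert_of_mem (Finset.mem_image_of_mem _
        (by simp only [Finset.mem_filter, Finset.mem_univ, true_and]; exact hj))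
    have hev : ∀ᶠ z in 𝓝 u, ∀ j, |g j z - g j u| < η / 2 := by
      rw [eventually_all]
      intro j
      have hcont : ContinuousAt (g j) u := (hgd j u hu).continuousAt
      have := Metric.tendsto_nhds.mp hcont.tendsto (η/2) (by positivity)
      simpa [Real.dist_eq] using this
    filter_upwards [hev] with z hz
    have := rthMax_sandwich (w := fun i => g i u) (w' := fun i => g i z)
      hr1 hrp hηpos hgap hz
    exact ⟨this.1.trans (by linarith), this.2⟩
  -- continuity of h on [0,T]
  have hconth : ContinuousOn h (Set.Icc 0 T) := by
    intro u hu
    apply ContinuousAt.continuousWithinAt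
    rw [ContinuousAt, Metric.tendsto_nhds]
    intro ε hε
    filter_upwards [key u hu ε hε] with z hz
    rw [Real.dist_eq]
    linarith [hz.1]
  -- comparison for each ε > 0
  have main : ∀ ε > (0:ℝ), ∀ t ∈ Set.Icc (0:ℝ) T, -h t ≤ ε * (1 + t) := by
    intro ε hε
    have := image_le_of_liminf_slope_right_lt_deriv_boundary
      (f := fun u => -h u) (f' := fun u => α (h u)) (a := 0) (b := T)
      (B := fun u => ε * (1 + u)) (B' := fun _ => ε)
      (hconth.neg) ?_ (by simpa using by linarith : -h 0 ≤ ε * (1 + 0)) ?_ ?_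
    · intro t ht; exact this ht
    · -- hf'
      intro s hs r' hr'
      have hsIcc : s ∈ Set.Icc (0:ℝ) T := Set.Ico_subset_Icc_self hs
      apply Filter.Eventually.frequently
      have E1 : ∀ᶠ z in 𝓝[>] s, ∃ j, g j s = h s ∧ h z = g j z :=
        nhdsWithin_le_nhds ((key s hsIcc 1 one_pos).mono fun z hz => hz.2)
      have E2 : ∀ᶠ z in 𝓝[>] s, ∀ j, g j s = h s → -r' < slope (g j) s z := by
        rw [eventually_all]
        intro j
        by_cases hjA : g j s = h s
        · have hd : -α (h s) ≤ deriv (g j) s := hjA ▸ hineq j s hsIcc hjA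
          have hder : HasDerivAt (g j) (deriv (g j) s) s := (hgd j s hsIcc).hasDerivAt
          have hslope := hasDerivAt_iff_tendsto_slope.mp hder
          have hev2 : ∀ᶠ z in 𝓝[≠] s, -r' < slope (g j) s z := by
            have : Set.Ioi (-r') ∈ 𝓝 (deriv (g j) s) := Ioi_mem_nhds (by linarith)
            filter_upwards [hslope this] with z hz using hz
          have hmono : 𝓝[>] s ≤ 𝓝[≠] s :=
            nhdsWithin_mono s fun z hz => ne_of_gt hz
          exact (hev2.filter_mono hmono).mono fun z hz _ => hz
        · exact Filter.Eventually.of_forall fun z hz => absurd hz hjA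
      filter_upwards [E1, E2, self_mem_nhdsWithin] with z hz1 hz2 hzs
      obtain ⟨j, hjs, hjz⟩ := hz1
      have hsl := hz2 j hjs
      have heqslope : slope (fun u => -h u) s z = -slope (g j) s z := by
        rw [slope_def_field, slope_def_field, hjz, hjs]
        ring
      rw [heqslope]
      linarith
    · intro u
      simpa using ((hasDerivAt_id u).const_add (1:ℝ)).const_mul ε
    · -- bound at contact points
      intro s hs hcontact
      have h1s : (1:ℝ) ≤ 1 + s := by linarith [hs.1]
      have hc2 : -h s = ε * (1 + s) := hcontact
      have hneg : h s < 0 := by nlinarith [hc2]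
      have := hα.2.1 hneg
      rw [hα.2.2] at this
      linarith
  intro t ht
  by_contra hneg
  push_neg at hneg
  have h1t : (0:ℝ) < 1 + t := by linarith [ht.1]
  have hεpos : 0 < -h t / (2 * (1 + t)) := div_pos (by linarith) (by linarith)
  have hm := main _ hεpos t ht
  have : -h t / (2 * (1 + t)) * (1 + t) = -h t / 2 := by
    field_simp
  rw [this] at hm
  linarith

/-- Time-varying combinatorial invariance (proof of Proposition 2): along a trajectory
satisfying the combinatorial barrier inequalities for the time-varying reach-avoid value
functions `V_j(x(t), τ₂(t))` with pivot `h̃ = max^{(r)}_j V_j`, at least `r` of the values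
remain nonnegative on `[0,T]` whenever at least `r` are nonnegative initially. -/
theorem timevarying_combinatorial_invariance {n p : ℕ}
    (T : ℝ) (hT : 0 < T)
    (V : Fin p → EuclideanSpace ℝ (Fin n) × ℝ → ℝ)
    (hV : ∀ j, ContDiff ℝ 1 (V j))
    (r : ℕ) (hr1 : 1 ≤ r) (hrp : r ≤ p)
    (α : ℝ → ℝ) (hα : IsClassKe α) (hαlip : LocallyLipschitz α)
    (θ : ℝ → ℝ) (hθ : ContinuousOn θ (Set.Icc 0 T)) (hθ0 : ∀ t ∈ Set.Icc 0 T, 0 ≤ θ t)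
    (ρ : ℝ → ℝ) (hρc : Continuous ρ) (hρ : IsPosDef ρ)
    (τ₂ : ℝ → ℝ) (hτ₂ : ∀ t ∈ Set.Icc 0 T, DifferentiableAt ℝ τ₂ t)
    (x : ℝ → EuclideanSpace ℝ (Fin n))
    (hx : ∀ t ∈ Set.Icc 0 T, DifferentiableAt ℝ x t)
    (hineq : ∀ j : Fin p, ∀ t ∈ Set.Icc 0 T,
      deriv (fun u => V j (x u, τ₂ u)) t ≥
        -α (V j (x t, τ₂ t)) -
          θ t * ρ (V j (x t, τ₂ t) - rthMax r (fun i => V i (x t, τ₂ t))))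
    (h0 : r ≤ (Finset.univ.filter (fun j : Fin p => 0 ≤ V j (x 0, τ₂ 0))).card) :
    ∀ t ∈ Set.Icc 0 T,
      r ≤ (Finset.univ.filter (fun j : Fin p => 0 ≤ V j (x t, τ₂ t))).card := by
  have hgd : ∀ j : Fin p, ∀ t ∈ Set.Icc (0:ℝ) T,
      DifferentiableAt ℝ (fun u => V j (x u, τ₂ u)) t := by
    intro j t ht
    exact DifferentiableAt.comp t ((hV j).differentiable one_ne_zero).differentiableAt
      ((hx t ht).prodMk (hτ₂ t ht))
  have hcore0 : 0 ≤ rthMax r (fun i => V i (x 0, τ₂ 0)) := by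
    obtain ⟨S, hSsub, hScard⟩ := Finset.exists_subset_card_eq h0
    apply le_rthMax_of_finset hr1 hScard
    intro j hj
    have hjf := hSsub hj
    simp only [Finset.mem_filter, Finset.mem_univ, true_and] at hjf
    exact hjf
  have hineq' : ∀ j : Fin p, ∀ t ∈ Set.Icc (0:ℝ) T,
      V j (x t, τ₂ t) = rthMax r (fun i => V i (x t, τ₂ t)) →
      -α (V j (x t, τ₂ t)) ≤ deriv (fun u => V j (x u, τ₂ u)) t := by
    intro j t ht hcontact
    have H := hineq j t ht
    have hz : V j (x t, τ₂ t) - rthMax r (fun i => V i (x t, τ₂ t)) = 0 :=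
      sub_eq_zero.mpr hcontact
    rw [hz, hρ.2.1, mul_zero, sub_zero] at H
    exact H
  have hcore := core_invariance hr1 hrp hT (fun j u => V j (x u, τ₂ u)) hgd α hα hineq' hcore0
  intro t ht
  have h1 : 0 ≤ rthMax r (fun i => V i (x t, τ₂ t)) := hcore t ht
  have h2 := rthMax_le_card_filter (w := fun i => V i (x t, τ₂ t)) hr1 hrp
  refine le_trans h2 (Finset.card_le_card ?_)
  intro j hj
  simp only [Finset.mem_filter, Finset.mem_univ, true_and] at hj ⊢
  linarith
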